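/- For every real number q, ∑_{σ ∈ S_n} q^{cycles(σ)} = q(q+1)(q+2)⋯(q+n-1). -/

import Mathlib

open Finset

/-- Number of cycles of a permutation, counting fixed points as cycles. -/
def cyclesCount {n : ℕ} (σ : Equiv.Perm (Fin n)) : ℕ :=
  σ.cycleType.card + (Finset.univ.filter fun x => σ x = x).card

section Aux

open Equiv Equiv.Perm

variable {α : Type*} [DecidableEq α] [Fintype α]

variable {α : Type*} [DecidableEq α] [Fintype α]

theorem support_swapMulCycle {c : Equiv.Perm α} {a b : α}
    (ha : c a = a) (hb : c b ≠ b) :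
    (Equiv.swap a b * c).support = insert a c.support := by
  have hba : b ≠ a := fun h => hb (by rw [h, ha])
  ext y
  simp only [Finset.mem_insert, Equiv.Perm.mem_support, Equiv.Perm.mul_apply]
  constructor
  · intro h
    by_contra hc
    push_neg at hc
    obtain ⟨hya, hcy⟩ := hc
    rw [hcy] at h
    rcases eq_or_ne y b with rfl | hyb
    · exact hb hcy
    · exact h (Equiv.swap_apply_of_ne_of_ne hya hyb)
  · rintro (rfl | h)
    · rw [ha, Equiv.swap_apply_left]; exact hba
    · intro he
      have hca : c y ≠ a := fun hcya => h (by rw [← ha] at hcya; exact c.injective hcya ▸ ha)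
      rcases eq_or_ne (c y) b with hcb | hcb
      · rw [hcb, Equiv.swap_apply_right] at he
        rw [← he] at h
        exact h ha
      · rw [Equiv.swap_apply_of_ne_of_ne hca hcb] at he
        exact h he

theorem isCycle_swapMulCycle {c : Equiv.Perm α} (hc : c.IsCycle) {a b : α}
    (ha : c a = a) (hb : c b ≠ b) :
    (Equiv.swap a b * c).IsCycle := by
  have hba : b ≠ a := fun h => hb (by rw [h, ha])
  set f := Equiv.swap a b * c with hf
  have hfa : f a = b := by rw [hf]; simp [Equiv.Perm.mul_apply, ha]
  have hanotc : a ∉ c.support := Equiv.Perm.notMem_support.mpr ha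
  have key : ∀ m : ℕ, ∃ k : ℕ, (f ^ k) a = (c ^ m) b := by
    intro m
    induction m with
    | zero => exact ⟨1, by simpa using hfa⟩
    | succ m ih =>
      obtain ⟨k, hk⟩ := ih
      by_cases hw : (c ^ (m + 1)) b = b
      · exact ⟨1, by rw [pow_one, hfa, hw]⟩
      · refine ⟨k + 1, ?_⟩
        have hmem : (c ^ (m + 1)) b ∈ c.support := by
          rw [Equiv.Perm.pow_apply_mem_support, Equiv.Perm.mem_support]; exact hb
        have hne_a : (c ^ (m + 1)) b ≠ a := fun h => hanotc (h ▸ hmem)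
        rw [pow_succ', Equiv.Perm.mul_apply, hk, hf, Equiv.Perm.mul_apply,
          ← Equiv.Perm.mul_apply c, ← pow_succ']
        exact Equiv.swap_apply_of_ne_of_ne hne_a hw
  refine ⟨a, by rw [hfa]; exact hba, ?_⟩
  intro y hy
  have hys : y = a ∨ y ∈ c.support := by
    have : y ∈ f.support := Equiv.Perm.mem_support.mpr hy
    rw [hf, support_swapMulCycle ha hb] at this
    exact Finset.mem_insert.mp this
  rcases hys with rfl | hmem
  · exact Equiv.Perm.SameCycle.refl _ _
  · obtain ⟨m, hm⟩ := hc.exists_pow_eq hb (Equiv.Perm.mem_support.mp hmem)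
    obtain ⟨k, hk⟩ := key m
    exact ⟨(k : ℤ), by rw [zpow_natCast, hk, hm]⟩



/-- Merging lemma: multiplying by `swap a b`, where `a` is a fixed point of `g`,
decreases the total cycle count (cycles plus fixed points) by one. -/
theorem cc_swap_mul (g : Equiv.Perm α) {a b : α} (ha : g a = a) (hab : b ≠ a) :
    Multiset.card (Equiv.swap a b * g).cycleType
        + (Finset.univ.filter fun x => (Equiv.swap a b * g) x = x).card + 1
      = Multiset.card g.cycleType + (Finset.univ.filter fun x => g x = x).card := by
  by_cases hb : g b = b
  · -- `b` is also fixed: the swap forms a brand new 2-cycle.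
    have hdisj : Equiv.Perm.Disjoint (Equiv.swap a b) g := by
      intro x
      rcases eq_or_ne x a with rfl | hxa
      · exact Or.inr ha
      rcases eq_or_ne x b with rfl | hxb
      · exact Or.inr hb
      · exact Or.inl (Equiv.swap_apply_of_ne_of_ne hxa hxb)
    have hct : (Equiv.swap a b * g).cycleType = (Equiv.swap a b).cycleType + g.cycleType :=
      hdisj.cycleType_mul
    have hcts : (Equiv.swap a b).cycleType = {2} := by
      rw [(isCycle_swap hab.symm).cycleType, card_support_swap hab.symm]
    have hfix : (Finset.univ.filter fun x => (Equiv.swap a b * g) x = x)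
        = ((Finset.univ.filter fun x => g x = x).erase a).erase b := by
      ext x
      simp only [Finset.mem_filter, Finset.mem_univ, true_and, Finset.mem_erase]
      simp only [Equiv.Perm.mul_apply]
      constructor
      · intro h
        rcases eq_or_ne x a with rfl | hxa
        · rw [ha, Equiv.swap_apply_left] at h; exact absurd h hab
        rcases eq_or_ne x b with rfl | hxb
        · rw [hb, Equiv.swap_apply_right] at h; exact absurd h.symm hab
        · have hga : g x ≠ a := fun hh => hxa (g.injective (by rw [hh, ha]))
          have hgb : g x ≠ b := fun hh => hxb (g.injective (by rw [hh, hb]))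
          rw [Equiv.swap_apply_of_ne_of_ne hga hgb] at h
          exact ⟨hxb, hxa, h⟩
      · rintro ⟨hxb, hxa, h⟩
        rw [h, Equiv.swap_apply_of_ne_of_ne hxa hxb]
    have hamem : a ∈ Finset.univ.filter fun x => g x = x := by simp [ha]
    have hbmem : b ∈ (Finset.univ.filter fun x => g x = x).erase a := by simp [hb, hab]
    rw [hct, hcts, hfix, Finset.card_erase_of_mem hbmem, Finset.card_erase_of_mem hamem]
    have h2 : 1 < (Finset.univ.filter fun x => g x = x).card :=
      Finset.one_lt_card.mpr ⟨a, hamem, b, by simp [hb], hab.symm⟩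
    simp only [Multiset.card_add, Multiset.card_singleton]
    omega
  · -- `b` is moved by `g`: `a` gets inserted into the cycle of `b`.
    set c := g.cycleOf b with hcdef
    have hcmem : c ∈ g.cycleFactorsFinset :=
      Equiv.Perm.cycleOf_mem_cycleFactorsFinset_iff.mpr (Equiv.Perm.mem_support.mpr hb)
    have hccyc : c.IsCycle := Equiv.Perm.isCycle_cycleOf g hb
    have hcb : c b = b ↔ False := by
      simp [hcdef, Equiv.Perm.cycleOf_apply_self, hb]
    have hcbne : c b ≠ b := fun h => (hcb.mp h)
    have hcsuple : c.support ⊆ g.support := Equiv.Perm.support_cycleOf_le g b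
    have hanotg : a ∉ g.support := Equiv.Perm.notMem_support.mpr ha
    have hanotc : a ∉ c.support := fun h => hanotg (hcsuple h)
    have hca : c a = a := Equiv.Perm.notMem_support.mp hanotc
    set d := g * c⁻¹ with hddef
    have hdisjcd : Equiv.Perm.Disjoint c d :=
      (Equiv.Perm.disjoint_mul_inv_of_mem_cycleFactorsFinset hcmem).symm
    have hcomm : Commute c g := Equiv.Perm.self_mem_cycle_factors_commute hcmem
    have hgcd : g = c * d := by
      rw [hddef, ← mul_assoc, hcomm.eq, mul_assoc, mul_inv_cancel, mul_one]
    have hprod : Equiv.swap a b * g = (Equiv.swap a b * c) * d := by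
      rw [hgcd, mul_assoc]
    have hdisj2 : Equiv.Perm.Disjoint (Equiv.swap a b * c) d := by
      intro x
      by_cases hx : (Equiv.swap a b * c) x = x
      · exact Or.inl hx
      · have : x ∈ (Equiv.swap a b * c).support := Equiv.Perm.mem_support.mpr hx
        rw [support_swapMulCycle hca hcbne] at this
        rcases Finset.mem_insert.mp this with heq | hxc
        · refine Or.inr ?_
          have hci : c⁻¹ a = a := Equiv.Perm.inv_eq_iff_eq.mpr hca.symm
          rw [heq, hddef, Equiv.Perm.mul_apply, hci]
          exact ha
        · rcases hdisjcd x with h | h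
          · exact absurd h (Equiv.Perm.mem_support.mp hxc)
          · exact Or.inr h
    have hct2 : (Equiv.swap a b * g).cycleType
        = (Equiv.swap a b * c).cycleType + d.cycleType := by
      rw [hprod]; exact hdisj2.cycleType_mul
    have hcyc2 : (Equiv.swap a b * c).IsCycle := isCycle_swapMulCycle hccyc hca hcbne
    have hsupp2 : (Equiv.swap a b * c).support.card = c.support.card + 1 := by
      rw [support_swapMulCycle hca hcbne, Finset.card_insert_of_notMem hanotc]
    have hctd : d.cycleType = g.cycleType - c.cycleType :=
      Equiv.Perm.cycleType_mul_inv_mem_cycleFactorsFinset_eq_sub hcmem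
    have hctc : c.cycleType ≤ g.cycleType :=
      Equiv.Perm.cycleType_le_of_mem_cycleFactorsFinset hcmem
    have hccard : Multiset.card c.cycleType = 1 := by
      rw [hccyc.cycleType]; rfl
    have hgcard1 : 1 ≤ Multiset.card g.cycleType := by
      rw [← hccard]; exact Multiset.card_le_card hctc
    -- cycle count is preserved
    have hcyccount : Multiset.card (Equiv.swap a b * g).cycleType
        = Multiset.card g.cycleType := by
      rw [hct2, hctd, Multiset.card_add, hcyc2.cycleType,
        Multiset.card_sub hctc, hccard]
      simp only [Multiset.card_singleton]
      omega
    -- fixed points decrease by one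
    have hfix2 : (Finset.univ.filter fun x => (Equiv.swap a b * g) x = x)
        = (Finset.univ.filter fun x => g x = x).erase a := by
      ext x
      simp only [Finset.mem_filter, Finset.mem_univ, true_and, Finset.mem_erase]
      simp only [Equiv.Perm.mul_apply]
      constructor
      · intro h
        rcases eq_or_ne x a with rfl | hxa
        · rw [ha, Equiv.swap_apply_left] at h; exact absurd h hab
        have hga : g x ≠ a := fun hh => hxa (g.injective (by rw [hh, ha]))
        have hgb : g x ≠ b := by
          intro hh
          rw [hh, Equiv.swap_apply_right] at h
          exact hxa h.symm
        rw [Equiv.swap_apply_of_ne_of_ne hga hgb] at h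
        exact ⟨hxa, h⟩
      · rintro ⟨hxa, h⟩
        have hxb : x ≠ b := fun hh => hb (hh ▸ h)
        rw [h, Equiv.swap_apply_of_ne_of_ne hxa hxb]
    have hamem : a ∈ Finset.univ.filter fun x => g x = x := by simp [ha]
    rw [hcyccount, hfix2, Finset.card_erase_of_mem hamem]
    have h1 : 1 ≤ (Finset.univ.filter fun x => g x = x).card := Finset.card_pos.mpr ⟨a, hamem⟩
    omega


end Aux

open Finset Equiv Equiv.Perm in
def finSuccNe (n : ℕ) : Fin n ≃ {x : Fin (n + 1) // x ≠ 0} where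
  toFun x := ⟨x.succ, Fin.succ_ne_zero x⟩
  invFun y := (y : Fin (n + 1)).pred y.2
  left_inv x := by simp
  right_inv y := by simp

open Finset Equiv Equiv.Perm in
theorem decomposeFin_symm_zero_eq {n : ℕ} (e : Equiv.Perm (Fin n)) :
    Equiv.Perm.decomposeFin.symm (0, e) = e.extendDomain (finSuccNe n) := by
  ext x
  refine Fin.cases ?_ ?_ x
  · rw [Equiv.Perm.decomposeFin_symm_apply_zero,
      Equiv.Perm.extendDomain_apply_not_subtype _ _ (by simp)]
  · intro i
    rw [Equiv.Perm.decomposeFin_symm_apply_succ, Equiv.swap_self]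
    have : (i.succ : Fin (n + 1)) = ((finSuccNe n) i : Fin (n + 1)) := rfl
    rw [this]
    have := Equiv.Perm.extendDomain_apply_image e (finSuccNe n) i
    rw [show ((finSuccNe n) i : Fin (n + 1)) = ((finSuccNe n) i : {x : Fin (n+1) // x ≠ 0}) from rfl] at *
    simp only [Equiv.coe_refl, id_eq]
    rw [this]
    rfl

open Finset Equiv Equiv.Perm in
theorem cyclesCount_decomposeFin {n : ℕ} (p : Fin (n + 1)) (e : Equiv.Perm (Fin n)) :
    cyclesCount (Equiv.Perm.decomposeFin.symm (p, e))
      = cyclesCount e + if p = 0 then 1 else 0 := by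
  have h0 : cyclesCount (Equiv.Perm.decomposeFin.symm (0, e)) = cyclesCount e + 1 := by
    unfold cyclesCount
    have hct : (Equiv.Perm.decomposeFin.symm (0, e)).cycleType = e.cycleType := by
      rw [decomposeFin_symm_zero_eq]
      exact Equiv.Perm.cycleType_extendDomain (finSuccNe n)
    have hfix : (Finset.univ.filter fun x => Equiv.Perm.decomposeFin.symm (0, e) x = x).card
        = (Finset.univ.filter fun x => e x = x).card + 1 := by
      rw [Finset.card_filter, Finset.card_filter, Fin.sum_univ_succ,
        Equiv.Perm.decomposeFin_symm_apply_zero]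
      simp only [if_pos rfl]
      have : ∀ i : Fin n, (if Equiv.Perm.decomposeFin.symm (0, e) i.succ = i.succ then 1 else 0)
          = if e i = i then 1 else 0 := by
        intro i
        rw [Equiv.Perm.decomposeFin_symm_apply_succ, Equiv.swap_self]
        simp [Fin.succ_inj]
      simp only [this]
      simp [add_comm]
    rw [hct, hfix]
    omega
  rcases eq_or_ne p 0 with rfl | hp
  · rw [h0, if_pos rfl]
  · rw [if_neg hp, add_zero]
    have hsplit : Equiv.Perm.decomposeFin.symm (p, e)
        = Equiv.swap 0 p * Equiv.Perm.decomposeFin.symm (0, e) := by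
      ext x
      refine Fin.cases ?_ ?_ x
      · rw [Equiv.Perm.decomposeFin_symm_apply_zero, Equiv.Perm.mul_apply,
          Equiv.Perm.decomposeFin_symm_apply_zero, Equiv.swap_apply_left]
      · intro i
        rw [Equiv.Perm.decomposeFin_symm_apply_succ, Equiv.Perm.mul_apply,
          Equiv.Perm.decomposeFin_symm_apply_succ, Equiv.swap_self]
        rfl
    have hfix0 : Equiv.Perm.decomposeFin.symm (0, e) 0 = 0 :=
      Equiv.Perm.decomposeFin_symm_apply_zero 0 e
    have := cc_swap_mul (Equiv.Perm.decomposeFin.symm (0, e)) hfix0 hp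
    rw [← hsplit] at this
    unfold cyclesCount at h0 ⊢
    omega


/-- `∑_{σ ∈ S_n} q^{cycles(σ)} = q(q+1)⋯(q+n-1)`. -/
theorem sum_q_pow_cycles (n : ℕ) (q : ℝ) :
    ∑ σ : Equiv.Perm (Fin n), q ^ cyclesCount σ = ∏ i ∈ Finset.range n, (q + i) := by
  induction n with
  | zero =>
    have h1 : ∀ σ : Equiv.Perm (Fin 0), cyclesCount σ = 0 := by
      intro σ
      have : σ = 1 := Subsingleton.elim _ _
      simp [cyclesCount, this]
    simp [h1]
  | succ n ih =>
    calc ∑ σ : Equiv.Perm (Fin (n + 1)), q ^ cyclesCount σ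
        = ∑ x : Fin (n + 1) × Equiv.Perm (Fin n),
            q ^ cyclesCount (Equiv.Perm.decomposeFin.symm x) :=
          (Equiv.sum_comp Equiv.Perm.decomposeFin.symm _).symm
      _ = ∑ p : Fin (n + 1), ∑ e : Equiv.Perm (Fin n),
            q ^ (cyclesCount e + if p = 0 then 1 else 0) := by
          rw [Fintype.sum_prod_type]
          exact Finset.sum_congr rfl fun p _ => Finset.sum_congr rfl fun e _ => by
            rw [cyclesCount_decomposeFin p e]
      _ = (q + n) * ∑ e : Equiv.Perm (Fin n), q ^ cyclesCount e := by
          rw [Fin.sum_univ_succ]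
          simp only [if_pos rfl, if_true, Fin.succ_ne_zero, if_false, pow_add, pow_one, pow_zero,
            mul_one, Finset.sum_const, Finset.card_univ, Fintype.card_fin, nsmul_eq_mul]
          rw [← Finset.sum_mul]
          ring
      _ = (q + n) * ∏ i ∈ Finset.range n, (q + i) := by rw [ih]
      _ = ∏ i ∈ Finset.range (n + 1), (q + i) := by
          rw [Finset.prod_range_succ]; ring
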